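/- Let A be an n×n complex matrix, define the n×n matrix A^∨ by A^∨_{ij} = (−1)^{n−j} A_{n+1−i, j}, and let B be the 2n×n matrix whose top n×n block is the identity I_n and whose bottom n×n block is A^∨. Then every n×n minor of B (the determinant of the n×n submatrix of B with rows indexed by any n-element subset of [2n], in increasing order) is a nonnegative real number if and only if A is totally nonnegative. (That is, the column span of B is a point of Gr_{≥0}(n,2n) if and only if A is totally nonnegative.) -/

import Mathlib

set_option maxHeartbeats 1000000


noncomputable section

/-- A complex number is a nonnegative real. -/
def IsNonnegReal (z : ℂ) : Prop := 0 ≤ z.re ∧ z.im = 0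

/-- The minor `det A[J, I]` of the square matrix `A` with row set `J` and column set `I`
(rows and columns taken in increasing order); `0` if `J` and `I` have different sizes. -/
def minorJI {n : ℕ} (A : Matrix (Fin n) (Fin n) ℂ) (J I : Finset (Fin n)) : ℂ :=
  if h : J.card = I.card then
    Matrix.det (Matrix.of fun a b : Fin I.card =>
      A ((J.orderIsoOfFin h) a) ((I.orderIsoOfFin rfl) b))
  else 0

/-- `A` is totally nonnegative if all of its minors are nonnegative reals. -/
def TotallyNonneg {n : ℕ} (A : Matrix (Fin n) (Fin n) ℂ) : Prop :=
  ∀ J I : Finset (Fin n), J.card = I.card → IsNonnegReal (minorJI A J I)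

/-- The maximal minor `det (M[I])` of an `N × k` matrix `M` with row set `I`
(rows taken in increasing order); `0` if `I` does not have exactly `k` elements. -/
def minorRow {N k : ℕ} (M : Matrix (Fin N) (Fin k) ℂ) (I : Finset (Fin N)) : ℂ :=
  if h : I.card = k then
    Matrix.det (Matrix.of fun a b : Fin k => M ((I.orderIsoOfFin h) a) b)
  else 0

/-- The matrix `A^∨` with `A^∨_{ij} = (-1)^{n-j} A_{n+1-i, j}` (in 1-based indexing);
in 0-based indexing, `A^∨ i j = (-1)^{n-1-j} A_{rev i, j}`. -/
def Avee {n : ℕ} (A : Matrix (Fin n) (Fin n) ℂ) : Matrix (Fin n) (Fin n) ℂ :=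
  fun i j => (-1 : ℂ) ^ (n - 1 - (j : ℕ)) * A i.rev j

/-- The `2n × n` matrix whose top `n × n` block is the identity and whose bottom `n × n`
block is `A^∨`. -/
def Bmat {n : ℕ} (A : Matrix (Fin n) (Fin n) ℂ) : Matrix (Fin (2 * n)) (Fin n) ℂ :=
  fun i j =>
    if h : (i : ℕ) < n then (if (i : ℕ) = (j : ℕ) then 1 else 0)
    else Avee A ⟨(i : ℕ) - n, by have := i.isLt; omega⟩ j

namespace TnnAux

open Equiv Finset

variable {n : ℕ}

def lowEmb (n : ℕ) : Fin n ↪ Fin (2 * n) :=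
  ⟨fun k => Fin.castLE (by omega) k, fun a b hab => by
    simpa [Fin.ext_iff] using congrArg Fin.val hab⟩

def hiEmb (n : ℕ) : Fin n ↪ Fin (2 * n) :=
  ⟨fun j => ⟨n + (j.rev : ℕ), by have := j.rev.isLt; omega⟩, fun a b hab => by
    have : (a.rev : ℕ) = (b.rev : ℕ) := by
      have := congrArg Fin.val hab; simpa using this
    exact Fin.rev_injective (Fin.ext this)⟩

@[simp] lemma lowEmb_val (k : Fin n) : ((lowEmb n k : Fin (2 * n)) : ℕ) = (k : ℕ) := rfl

@[simp] lemma hiEmb_val (j : Fin n) : ((hiEmb n j : Fin (2 * n)) : ℕ) = n + (j.rev : ℕ) := rfl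

def Ise (J K : Finset (Fin n)) : Finset (Fin (2 * n)) :=
  Kᶜ.map (lowEmb n) ∪ J.map (hiEmb n)

lemma card_Ise (J K : Finset (Fin n)) : (Ise J K).card = Kᶜ.card + J.card := by
  rw [Ise, Finset.card_union_of_disjoint, Finset.card_map, Finset.card_map]
  rw [Finset.disjoint_left]
  rintro x hx hx'
  rw [Finset.mem_map] at hx hx'
  obtain ⟨k, -, rfl⟩ := hx
  obtain ⟨j, -, hj⟩ := hx'
  have := congrArg Fin.val hj
  simp only [hiEmb_val, lowEmb_val] at this
  have := k.isLt
  omega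

lemma compl_card_le (S : Finset (Fin n)) : Sᶜ.card ≤ n := by
  have h1 : Sᶜ.card = Fintype.card (Fin n) - S.card := Finset.card_compl S
  simp only [Fintype.card_fin] at h1
  omega

lemma card_compl_add_card' (S : Finset (Fin n)) : Sᶜ.card + S.card = n := by
  have h1 : Sᶜ.card = Fintype.card (Fin n) - S.card := Finset.card_compl S
  have h2 : S.card ≤ Fintype.card (Fin n) := S.card_le_univ
  simp only [Fintype.card_fin] at h1 h2
  omega

lemma card_Ise_eq (J K : Finset (Fin n)) (h : J.card = K.card) : (Ise J K).card = n := by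
  rw [card_Ise, h, card_compl_add_card']

/-- determinant under two different index equivalences -/
lemma det_submatrix_equivs {α : Type} [Fintype α] [DecidableEq α] {N : ℕ}
    (M : Matrix (Fin N) (Fin N) ℂ) (e₁ e₂ : α ≃ Fin N) :
    (M.submatrix e₁ e₂).det = ((Equiv.Perm.sign (e₂.trans e₁.symm) : ℤ) : ℂ) * M.det := by
  have h : M.submatrix e₁ e₂ = (M.submatrix e₁ e₁).submatrix id ⇑(e₂.trans e₁.symm) := by
    ext a b
    simp [Matrix.submatrix_apply]
  rw [h, Matrix.det_permute', Matrix.det_submatrix_equiv_self]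

lemma sum_orderEmbOfFin (S : Finset (Fin n)) (f : Fin n → ℕ) :
    ∑ i : Fin S.card, f (S.orderEmbOfFin rfl i) = ∑ y ∈ S, f y := by
  have himg : Finset.image (S.orderEmbOfFin rfl) Finset.univ = S := by
    ext y
    simp only [Finset.mem_image, Finset.mem_univ, true_and]
    constructor
    · rintro ⟨i, rfl⟩; exact Finset.orderEmbOfFin_mem S rfl i
    · intro hy
      have hr : y ∈ Set.range (S.orderEmbOfFin rfl) := by
        rw [Finset.range_orderEmbOfFin]; exact hy
      exact hr
  conv_rhs => rw [← himg]
  rw [Finset.sum_image (fun a _ b _ hab => (S.orderEmbOfFin rfl).injective hab)]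

def oEquiv (K : Finset (Fin n)) : Fin Kᶜ.card ⊕ Fin K.card ≃ Fin n :=
  finSumFinEquiv.trans (finCongr (card_compl_add_card' K))

lemma oEquiv_inl (K : Finset (Fin n)) (x : Fin Kᶜ.card) :
    oEquiv K (Sum.inl x) = ⟨(x : ℕ), lt_of_lt_of_le x.isLt (compl_card_le K)⟩ := by
  apply Fin.ext
  simp [oEquiv]

lemma oEquiv_inr (K : Finset (Fin n)) (y : Fin K.card) :
    oEquiv K (Sum.inr y) = ⟨Kᶜ.card + (y : ℕ), by
      have := y.isLt; have := card_compl_add_card' K; omega⟩ := by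
  apply Fin.ext
  simp [oEquiv]

def rowEquiv (K : Finset (Fin n)) : Fin Kᶜ.card ⊕ Fin K.card ≃ Fin n :=
  (Equiv.sumCongr (Equiv.refl (Fin Kᶜ.card)) (Fin.revPerm)).trans (oEquiv K)

lemma rowEquiv_inl (K : Finset (Fin n)) (x : Fin Kᶜ.card) :
    rowEquiv K (Sum.inl x) = ⟨(x : ℕ), lt_of_lt_of_le x.isLt (compl_card_le K)⟩ := by
  simp only [rowEquiv, Equiv.trans_apply, Equiv.sumCongr_apply, Sum.map_inl, Equiv.refl_apply]
  exact oEquiv_inl K x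

lemma rowEquiv_inr (K : Finset (Fin n)) (y : Fin K.card) :
    rowEquiv K (Sum.inr y) = ⟨Kᶜ.card + (y.rev : ℕ), by
      have := y.rev.isLt; have := card_compl_add_card' K; omega⟩ := by
  simp only [rowEquiv, Equiv.trans_apply, Equiv.sumCongr_apply, Sum.map_inr, Fin.revPerm_apply]
  exact oEquiv_inr K y.rev

lemma col_bij (K : Finset (Fin n)) : Function.Bijective
    (Sum.elim (fun x : Fin Kᶜ.card => (Kᶜ.orderEmbOfFin rfl x : Fin n))
      (fun y : Fin K.card => (K.orderEmbOfFin rfl y : Fin n))) := by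
  rw [Fintype.bijective_iff_injective_and_card]
  constructor
  · rintro (x | x) (y | y) hxy <;> simp only [Sum.elim_inl, Sum.elim_inr] at hxy
    · exact congrArg Sum.inl ((Kᶜ.orderEmbOfFin rfl).injective hxy)
    · exfalso
      have h1 := Finset.orderEmbOfFin_mem Kᶜ rfl x
      rw [hxy] at h1
      exact (Finset.mem_compl.1 h1) (Finset.orderEmbOfFin_mem K rfl y)
    · exfalso
      have h1 := Finset.orderEmbOfFin_mem Kᶜ rfl y
      rw [← hxy] at h1
      exact (Finset.mem_compl.1 h1) (Finset.orderEmbOfFin_mem K rfl x)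
    · exact congrArg Sum.inr ((K.orderEmbOfFin rfl).injective hxy)
  · simp only [Fintype.card_sum, Fintype.card_fin]
    exact card_compl_add_card' K

def colEquiv (K : Finset (Fin n)) : Fin Kᶜ.card ⊕ Fin K.card ≃ Fin n :=
  Equiv.ofBijective _ (col_bij K)

lemma colEquiv_inl (K : Finset (Fin n)) (x : Fin Kᶜ.card) :
    colEquiv K (Sum.inl x) = Kᶜ.orderEmbOfFin rfl x := rfl

lemma colEquiv_inr (K : Finset (Fin n)) (y : Fin K.card) :
    colEquiv K (Sum.inr y) = K.orderEmbOfFin rfl y := rfl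


lemma Bmat_lowEmb (A : Matrix (Fin n) (Fin n) ℂ) (k : Fin n) (j : Fin n) :
    Bmat A (lowEmb n k) j = if (k : ℕ) = (j : ℕ) then 1 else 0 := by
  have h : ((lowEmb n k : Fin (2 * n)) : ℕ) < n := by
    rw [lowEmb_val]; exact k.isLt
  rw [Bmat, dif_pos h]
  rfl

lemma Bmat_hiEmb (A : Matrix (Fin n) (Fin n) ℂ) (j : Fin n) (col : Fin n) :
    Bmat A (hiEmb n j) col = (-1 : ℂ) ^ (n - 1 - (col : ℕ)) * A j col := by
  have h : ¬ ((hiEmb n j : Fin (2 * n)) : ℕ) < n := by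
    rw [hiEmb_val]; omega
  rw [Bmat, dif_neg h]
  have h2 : (⟨((hiEmb n j : Fin (2 * n)) : ℕ) - n, by
      have := (hiEmb n j).isLt; omega⟩ : Fin n) = j.rev := by
    apply Fin.ext
    simp only [hiEmb_val]
    omega
  rw [h2, Avee, Fin.rev_rev]

lemma Ise_snd_lt (K : Finset (Fin n)) (a : Fin n)
    (ha : ¬ (a : ℕ) < Kᶜ.card) : n - 1 - (a : ℕ) < K.card := by
  have h1 := a.isLt
  have h2 := card_compl_add_card' K
  omega

lemma Ise_orderEmbOfFin (J K : Finset (Fin n)) (h : J.card = K.card) :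
    (fun a : Fin n => if ha : (a : ℕ) < Kᶜ.card then lowEmb n (Kᶜ.orderEmbOfFin rfl ⟨a, ha⟩)
      else hiEmb n (J.orderEmbOfFin h ⟨n - 1 - (a : ℕ), Ise_snd_lt K a ha⟩))
    = (Ise J K).orderEmbOfFin (card_Ise_eq J K h) := by
  apply Finset.orderEmbOfFin_unique
  · intro x
    rw [Ise, Finset.mem_union]
    split_ifs with hx
    · exact Or.inl (Finset.mem_map_of_mem (lowEmb n)
        (Finset.orderEmbOfFin_mem Kᶜ rfl ⟨(x : ℕ), hx⟩))
    · exact Or.inr (Finset.mem_map_of_mem (hiEmb n)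
        (Finset.orderEmbOfFin_mem J h ⟨n - 1 - (x : ℕ), Ise_snd_lt K x hx⟩))
  · intro x y hxy
    rw [Fin.lt_def] at hxy
    rw [Fin.lt_def]
    dsimp only
    split_ifs with h1 h2 h2
    · simp only [lowEmb_val]
      have : (⟨(x : ℕ), h1⟩ : Fin Kᶜ.card) < ⟨(y : ℕ), h2⟩ := by rw [Fin.lt_def]; exact hxy
      exact (Kᶜ.orderEmbOfFin rfl).strictMono this
    · simp only [lowEmb_val, hiEmb_val]
      have := (Kᶜ.orderEmbOfFin rfl ⟨(x : ℕ), h1⟩).isLt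
      omega
    · exact absurd hxy (by omega)
    · simp only [hiEmb_val]
      have harg : (⟨n - 1 - (y : ℕ), Ise_snd_lt K y h2⟩ : Fin K.card)
          < ⟨n - 1 - (x : ℕ), Ise_snd_lt K x h1⟩ := by
        rw [Fin.lt_def]
        simp only
        have hx := x.isLt; have hy := y.isLt
        have hcc := card_compl_add_card' K
        omega
      have hlt := (J.orderEmbOfFin h).strictMono harg
      have hrev := Fin.rev_lt_rev.2 hlt
      rw [Fin.lt_def] at hrev
      omega

lemma psi_snd_lt (S : Finset (Fin n)) (a : Fin n) (h : ¬ (a : ℕ) < Sᶜ.card) :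
    n - 1 - (a : ℕ) < S.card := by
  have h1 := a.isLt
  have h2 := card_compl_add_card' S
  omega

def psi (S : Finset (Fin n)) : Equiv.Perm (Fin n) :=
  Equiv.ofBijective
    (fun a => if h : (a : ℕ) < Sᶜ.card then Sᶜ.orderEmbOfFin rfl ⟨a, h⟩
      else S.orderEmbOfFin rfl ⟨n - 1 - (a : ℕ), psi_snd_lt S a h⟩)
    (by
      rw [← Finite.injective_iff_bijective]
      intro a b hab
      simp only at hab
      split_ifs at hab with h1 h2 h2
      · have := (Sᶜ.orderEmbOfFin rfl).injective hab
        have := congrArg Fin.val this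
        exact Fin.ext this
      · exfalso
        have hm1 := Finset.orderEmbOfFin_mem Sᶜ rfl ⟨a, h1⟩
        rw [hab] at hm1
        have hm2 := Finset.orderEmbOfFin_mem S rfl ⟨n - 1 - (b : ℕ), psi_snd_lt S b h2⟩
        rw [Finset.mem_compl] at hm1
        exact hm1 hm2
      · exfalso
        have hm1 := Finset.orderEmbOfFin_mem Sᶜ rfl ⟨b, h2⟩
        rw [← hab] at hm1
        have hm2 := Finset.orderEmbOfFin_mem S rfl ⟨n - 1 - (a : ℕ), psi_snd_lt S a h1⟩
        rw [Finset.mem_compl] at hm1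
        exact hm1 hm2
      · have := (S.orderEmbOfFin rfl).injective hab
        have := congrArg Fin.val this
        simp only at this
        have ha := a.isLt; have hb := b.isLt
        exact Fin.ext (by omega))

lemma psi_apply_lt (S : Finset (Fin n)) (a : Fin n) (h : (a : ℕ) < Sᶜ.card) :
    psi S a = Sᶜ.orderEmbOfFin rfl ⟨a, h⟩ := by
  simp only [psi, Equiv.ofBijective_apply, dif_pos h]

lemma psi_apply_ge (S : Finset (Fin n)) (a : Fin n) (h : ¬ (a : ℕ) < Sᶜ.card) :
    psi S a = S.orderEmbOfFin rfl ⟨n - 1 - (a : ℕ), psi_snd_lt S a h⟩ := by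
  simp only [psi, Equiv.ofBijective_apply, dif_neg h]

lemma neg_one_pow_parity (a b : ℕ) (h : a % 2 = b % 2) : (-1 : ℤˣ) ^ a = (-1) ^ b := by
  rcases Nat.even_or_odd a with ha | ha
  · have hb : Even b := by rw [Nat.even_iff]; rw [Nat.even_iff] at ha; omega
    rw [Even.neg_one_pow ha, Even.neg_one_pow hb]
  · have hb : Odd b := by rw [Nat.odd_iff]; rw [Nat.odd_iff] at ha; omega
    rw [Odd.neg_one_pow ha, Odd.neg_one_pow hb]

lemma sign_psi (S : Finset (Fin n)) :
    Equiv.Perm.sign (psi S) = (-1 : ℤˣ) ^ (∑ y ∈ S, (n - 1 - (y : ℕ))) := by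
  induction S using Finset.induction_on_max with
  | empty =>
    have hpsi : psi (∅ : Finset (Fin n)) = 1 := by
      apply Equiv.ext
      intro a
      have hcompl : ((∅ : Finset (Fin n))ᶜ).card = n := by simp
      have h : (a : ℕ) < ((∅ : Finset (Fin n))ᶜ).card := by rw [hcompl]; exact a.isLt
      rw [psi_apply_lt _ _ h]
      have huniq : (fun i : Fin (((∅ : Finset (Fin n))ᶜ).card) =>
          (⟨(i : ℕ), lt_of_lt_of_le i.isLt (compl_card_le _)⟩ : Fin n))
          = ((∅ : Finset (Fin n))ᶜ).orderEmbOfFin rfl := by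
        apply Finset.orderEmbOfFin_unique
        · intro x; simp
        · intro x y hxy; rw [Fin.lt_def] at hxy ⊢; exact hxy
      rw [← huniq, Equiv.Perm.one_apply]
    rw [hpsi]
    simp
  | insert m S hmax ih =>
    obtain ⟨n', rfl⟩ : ∃ n', n = n' + 1 := ⟨n - 1, by have := m.pos; omega⟩
    have hm : m ∉ S := fun hmS => lt_irrefl m (hmax m hmS)
    have hmc : m ∈ Sᶜ := Finset.mem_compl.2 hm
    have hc1 : 1 ≤ Sᶜ.card := Finset.card_pos.2 ⟨m, hmc⟩
    have hcn : Sᶜ.card + S.card = n' + 1 := card_compl_add_card' S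
    have hcompl : (insert m S)ᶜ = Sᶜ.erase m := Finset.compl_insert
    have hcc : ((insert m S)ᶜ).card = Sᶜ.card - 1 := by
      rw [hcompl, Finset.card_erase_of_mem hmc]
    have hinsc : (insert m S).card = S.card + 1 := Finset.card_insert_of_notMem hm
    obtain ⟨p, hp⟩ : ∃ p : Fin Sᶜ.card, Sᶜ.orderEmbOfFin rfl p = m := by
      refine ⟨(Sᶜ.orderIsoOfFin rfl).symm ⟨m, hmc⟩, ?_⟩
      have h1 := (Sᶜ.orderIsoOfFin rfl).apply_symm_apply ⟨m, hmc⟩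
      have h2 := congrArg Subtype.val h1
      rw [← Finset.coe_orderIsoOfFin_apply]
      exact h2
    -- counting: rank of m in Sᶜ
    have hpr : (p : ℕ) + S.card = (m : ℕ) := by
      have h1 : (Finset.Iio m).card = (m : ℕ) := by simp
      have hsplit := Finset.card_filter_add_card_filter_not
        (s := Finset.Iio m) (p := fun x => x ∈ S)
      have hfS : (Finset.Iio m).filter (fun x => x ∈ S) = S := by
        ext x
        simp only [Finset.mem_filter, Finset.mem_Iio]
        exact ⟨fun h => h.2, fun h => ⟨hmax x h, h⟩⟩
      have hfSc : (Finset.Iio m).filter (fun x => ¬ x ∈ S) =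
          Finset.image (Sᶜ.orderEmbOfFin rfl) (Finset.Iio p) := by
        ext x
        simp only [Finset.mem_filter, Finset.mem_Iio, Finset.mem_image]
        constructor
        · rintro ⟨hxm, hxS⟩
          have hxc : x ∈ Sᶜ := Finset.mem_compl.2 hxS
          have hrange : x ∈ Set.range (Sᶜ.orderEmbOfFin rfl) := by
            rw [Finset.range_orderEmbOfFin]; exact hxc
          obtain ⟨i, hi⟩ := hrange
          refine ⟨i, ?_, hi⟩
          have hlt : Sᶜ.orderEmbOfFin rfl i < Sᶜ.orderEmbOfFin rfl p := by
            rw [hi, hp]; exact hxm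
          exact (Sᶜ.orderEmbOfFin rfl).strictMono.lt_iff_lt.1 hlt
        · rintro ⟨i, hip, rfl⟩
          refine ⟨?_, ?_⟩
          · rw [← hp]; exact (Sᶜ.orderEmbOfFin rfl).strictMono hip
          · exact Finset.mem_compl.1 (Finset.orderEmbOfFin_mem Sᶜ rfl i)
      have himg : (Finset.image (Sᶜ.orderEmbOfFin rfl) (Finset.Iio p)).card = (p : ℕ) := by
        rw [Finset.card_image_of_injective _ (Sᶜ.orderEmbOfFin rfl).injective, Fin.card_Iio]
      rw [hfS, hfSc, himg, h1] at hsplit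
      omega
    have hple := p.isLt
    have hcle : Sᶜ.card ≤ n' + 1 := compl_card_le S
    obtain ⟨pn, hpnv⟩ : ∃ pn : Fin (n' + 1), (pn : ℕ) = (p : ℕ) := ⟨⟨(p : ℕ), by omega⟩, rfl⟩
    obtain ⟨cn1, hcn1v⟩ : ∃ cn1 : Fin (n' + 1), (cn1 : ℕ) = Sᶜ.card - 1 :=
      ⟨⟨Sᶜ.card - 1, by omega⟩, rfl⟩
    -- characterization of the erased complement
    have hidx : ∀ x : Fin (((insert m S)ᶜ).card),
        (if (x : ℕ) < (p : ℕ) then (x : ℕ) else (x : ℕ) + 1) < Sᶜ.card := by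
      intro x
      have hx := x.isLt
      split_ifs <;> omega
    have herase : (fun x : Fin (((insert m S)ᶜ).card) =>
        Sᶜ.orderEmbOfFin rfl
          ⟨if (x : ℕ) < (p : ℕ) then (x : ℕ) else (x : ℕ) + 1, hidx x⟩)
        = ((insert m S)ᶜ).orderEmbOfFin rfl := by
      apply Finset.orderEmbOfFin_unique
      · intro x
        rw [Finset.mem_compl, Finset.mem_insert]
        push_neg
        constructor
        · intro heq
          have := (Sᶜ.orderEmbOfFin rfl).injective (heq.trans hp.symm)
          have hv := congrArg Fin.val this
          simp only at hv
          split_ifs at hv <;> omega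
        · exact Finset.mem_compl.1 (Finset.orderEmbOfFin_mem Sᶜ rfl _)
      · intro x y hxy
        apply (Sᶜ.orderEmbOfFin rfl).strictMono
        rw [Fin.lt_def] at hxy ⊢
        simp only
        split_ifs <;> omega
    -- characterization of the inserted set
    have hinsertEmb : (fun y : Fin ((insert m S).card) =>
        if h : (y : ℕ) < S.card then S.orderEmbOfFin rfl ⟨y, h⟩ else m)
        = (insert m S).orderEmbOfFin rfl := by
      apply Finset.orderEmbOfFin_unique
      · intro y
        split_ifs with h
        · exact Finset.mem_insert_of_mem (Finset.orderEmbOfFin_mem S rfl ⟨y, h⟩)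
        · exact Finset.mem_insert_self m S
      · intro y1 y2 h12
        have hv1 := y1.isLt; have hv2 := y2.isLt
        rw [Fin.lt_def] at h12
        dsimp only
        split_ifs with h1 h2 h2
        · exact (S.orderEmbOfFin rfl).strictMono (by rw [Fin.lt_def]; exact h12)
        · exact hmax _ (Finset.orderEmbOfFin_mem S rfl ⟨y1, h1⟩)
        · exact absurd h12 (by omega)
        · exact absurd h12 (by omega)
    have hpsieq : psi (insert m S) =
        psi S * ((Fin.cycleRange pn)⁻¹ * Fin.cycleRange cn1) := by
      apply Equiv.ext
      intro x
      rw [Equiv.Perm.mul_apply, Equiv.Perm.mul_apply]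
      rcases lt_or_ge (x : ℕ) (Sᶜ.card - 1) with hx | hx
      · have hxc : x < cn1 := by rw [Fin.lt_def]; omega
        have h1 : Fin.cycleRange cn1 x = ⟨(x : ℕ) + 1, by omega⟩ :=
          Fin.ext (by rw [Fin.coe_cycleRange_of_lt hxc])
        rw [h1]
        rcases lt_or_ge (x : ℕ) (p : ℕ) with hxp | hxp
        · -- case 1 : γ x = x
          have h2 : Fin.cycleRange pn x = ⟨(x : ℕ) + 1, by omega⟩ :=
            Fin.ext (by rw [Fin.coe_cycleRange_of_lt (show x < pn by rw [Fin.lt_def]; omega)])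
          rw [← h2, Equiv.Perm.coe_inv, Equiv.symm_apply_apply]
          have hxlt : (x : ℕ) < ((insert m S)ᶜ).card := by rw [hcc]; omega
          rw [psi_apply_lt _ _ hxlt, psi_apply_lt _ _ (show (x : ℕ) < Sᶜ.card by omega)]
          simp only [← herase]
          congr 1
          exact Fin.ext (by simp only [if_pos hxp])
        · -- case 2 : γ x = x + 1
          have h2 : Fin.cycleRange pn ⟨(x : ℕ) + 1, by omega⟩ = ⟨(x : ℕ) + 1, by omega⟩ :=
            Fin.cycleRange_of_gt (by rw [Fin.lt_def]; simp only; omega)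
          rw [← h2, Equiv.Perm.coe_inv, Equiv.symm_apply_apply]
          have hxlt : (x : ℕ) < ((insert m S)ᶜ).card := by rw [hcc]; omega
          rw [psi_apply_lt _ _ hxlt, psi_apply_lt _ _ (show ((⟨(x : ℕ) + 1, by omega⟩ :
            Fin (n' + 1)) : ℕ) < Sᶜ.card by simp only; omega)]
          simp only [← herase]
          congr 1
          exact Fin.ext (by simp only [if_neg (by omega : ¬ (x : ℕ) < (p : ℕ))])
      · rcases eq_or_lt_of_le hx with hx1 | hx1
        · -- case 3 : x = c - 1, γ x = pn
          have hxeq : x = cn1 := Fin.ext (by omega)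
          have h1 : Fin.cycleRange cn1 x = 0 := by rw [hxeq, Fin.cycleRange_self]
          have h2 : Fin.cycleRange pn pn = 0 := Fin.cycleRange_self pn
          rw [h1, ← h2, Equiv.Perm.coe_inv, Equiv.symm_apply_apply]
          have hxge : ¬ (x : ℕ) < ((insert m S)ᶜ).card := by rw [hcc]; omega
          have hpnlt : (pn : ℕ) < Sᶜ.card := by omega
          rw [psi_apply_ge _ _ hxge, psi_apply_lt _ _ hpnlt]
          simp only [← hinsertEmb]
          rw [dif_neg (show ¬ (n' + 1 - 1 - (x : ℕ) < S.card) by omega)]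
          rw [show (⟨(pn : ℕ), hpnlt⟩ : Fin Sᶜ.card) = p from Fin.ext hpnv, hp]
        · -- case 4 : γ x = x
          have h1 : Fin.cycleRange cn1 x = x := Fin.cycleRange_of_gt (by
            rw [Fin.lt_def]; omega)
          have h2 : Fin.cycleRange pn x = x := Fin.cycleRange_of_gt (by
            rw [Fin.lt_def]; omega)
          have h2' : (Fin.cycleRange pn)⁻¹ x = x := by
            have h3 := congrArg (⇑(Fin.cycleRange pn)⁻¹) h2
            rw [Equiv.Perm.coe_inv, Equiv.symm_apply_apply] at h3
            exact h3.symm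
          rw [h1, h2']
          have hxge : ¬ (x : ℕ) < ((insert m S)ᶜ).card := by rw [hcc]; omega
          have hxge' : ¬ (x : ℕ) < Sᶜ.card := by omega
          rw [psi_apply_ge _ _ hxge, psi_apply_ge _ _ hxge']
          simp only [← hinsertEmb]
          have hlt : n' + 1 - 1 - (x : ℕ) < S.card := by
            have := x.isLt; omega
          rw [dif_pos hlt]
    rw [hpsieq, map_mul, ih, map_mul, map_inv, Fin.sign_cycleRange, Fin.sign_cycleRange,
      Finset.sum_insert hm]
    have hinv : ((-1 : ℤˣ) ^ (pn : ℕ))⁻¹ = (-1 : ℤˣ) ^ (pn : ℕ) := by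
      rw [← inv_pow, show ((-1 : ℤˣ))⁻¹ = -1 by decide]
    rw [hinv, ← pow_add, ← pow_add]
    apply neg_one_pow_parity
    have hm1 := m.isLt
    rw [hpnv, hcn1v]
    omega


lemma rowEmb_inl (A : Matrix (Fin n) (Fin n) ℂ) (J K : Finset (Fin n)) (h : J.card = K.card)
    (x : Fin Kᶜ.card) :
    (Ise J K).orderEmbOfFin (card_Ise_eq J K h) (rowEquiv K (Sum.inl x)) =
      lowEmb n (Kᶜ.orderEmbOfFin rfl x) := by
  rw [rowEquiv_inl, ← Ise_orderEmbOfFin J K h]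
  beta_reduce
  rw [dif_pos (show ((⟨(x : ℕ), lt_of_lt_of_le x.isLt (compl_card_le K)⟩ : Fin n) : ℕ)
    < Kᶜ.card from x.isLt)]

lemma rowEmb_inr (A : Matrix (Fin n) (Fin n) ℂ) (J K : Finset (Fin n)) (h : J.card = K.card)
    (y : Fin K.card) :
    (Ise J K).orderEmbOfFin (card_Ise_eq J K h) (rowEquiv K (Sum.inr y)) =
      hiEmb n (J.orderEmbOfFin h y) := by
  rw [rowEquiv_inr, ← Ise_orderEmbOfFin J K h]
  beta_reduce
  have hge : ¬ ((⟨Kᶜ.card + (y.rev : ℕ), by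
      have := y.rev.isLt; have := card_compl_add_card' K; omega⟩ : Fin n) : ℕ) < Kᶜ.card := by
    simp only
    omega
  rw [dif_neg hge]
  refine congrArg _ (congrArg _ (Fin.ext ?_))
  simp only
  have h2 : (y.rev : ℕ) = K.card - 1 - (y : ℕ) := by
    rw [Fin.val_rev]
    omega
  have h3 := y.isLt
  have h4 := card_compl_add_card' K
  omega

lemma main_det (A : Matrix (Fin n) (Fin n) ℂ) (J K : Finset (Fin n)) (h : J.card = K.card) :
    (Matrix.of fun a b : Fin n =>
        Bmat A ((Ise J K).orderEmbOfFin (card_Ise_eq J K h) a) b).det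
    = (Matrix.of fun y b : Fin K.card =>
        A (J.orderEmbOfFin h y) (K.orderEmbOfFin rfl b)).det := by
  have hcr := card_compl_add_card' K
  have hblocks : (Matrix.of fun a b : Fin n =>
        Bmat A ((Ise J K).orderEmbOfFin (card_Ise_eq J K h) a) b).submatrix
          (rowEquiv K) (colEquiv K) =
      Matrix.fromBlocks (1 : Matrix (Fin Kᶜ.card) (Fin Kᶜ.card) ℂ) 0
        (Matrix.of fun (y : Fin K.card) (x : Fin Kᶜ.card) =>
          (-1 : ℂ) ^ (n - 1 - ((Kᶜ.orderEmbOfFin rfl x : Fin n) : ℕ)) *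
            A (J.orderEmbOfFin h y) (Kᶜ.orderEmbOfFin rfl x))
        (Matrix.of fun (y b : Fin K.card) =>
          (-1 : ℂ) ^ (n - 1 - ((K.orderEmbOfFin rfl b : Fin n) : ℕ)) *
            A (J.orderEmbOfFin h y) (K.orderEmbOfFin rfl b)) := by
    ext i j
    rcases i with x | y <;> rcases j with x' | b <;>
      simp only [Matrix.submatrix_apply, Matrix.of_apply]
    · rw [rowEmb_inl A J K h, colEquiv_inl, Bmat_lowEmb, Matrix.fromBlocks_apply₁₁,
        Matrix.one_apply]
      by_cases hxx : x = x'
      · subst hxx; rw [if_pos rfl, if_pos rfl]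
      · rw [if_neg, if_neg hxx]
        intro hv
        exact hxx ((Kᶜ.orderEmbOfFin rfl).injective (Fin.ext hv))
    · rw [rowEmb_inl A J K h, colEquiv_inr, Bmat_lowEmb, Matrix.fromBlocks_apply₁₂,
        Matrix.zero_apply]
      rw [if_neg]
      intro hv
      have heq : (Kᶜ.orderEmbOfFin rfl x : Fin n) = K.orderEmbOfFin rfl b := Fin.ext hv
      have h1 := Finset.orderEmbOfFin_mem Kᶜ rfl x
      rw [heq] at h1
      exact (Finset.mem_compl.1 h1) (Finset.orderEmbOfFin_mem K rfl b)
    · rw [rowEmb_inr A J K h, colEquiv_inl, Bmat_hiEmb, Matrix.fromBlocks_apply₂₁,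
        Matrix.of_apply]
    · rw [rowEmb_inr A J K h, colEquiv_inr, Bmat_hiEmb, Matrix.fromBlocks_apply₂₂,
        Matrix.of_apply]
  -- determinant of the block matrix
  have hDdet : (Matrix.fromBlocks (1 : Matrix (Fin Kᶜ.card) (Fin Kᶜ.card) ℂ) 0
        (Matrix.of fun (y : Fin K.card) (x : Fin Kᶜ.card) =>
          (-1 : ℂ) ^ (n - 1 - ((Kᶜ.orderEmbOfFin rfl x : Fin n) : ℕ)) *
            A (J.orderEmbOfFin h y) (Kᶜ.orderEmbOfFin rfl x))
        (Matrix.of fun (y b : Fin K.card) =>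
          (-1 : ℂ) ^ (n - 1 - ((K.orderEmbOfFin rfl b : Fin n) : ℕ)) *
            A (J.orderEmbOfFin h y) (K.orderEmbOfFin rfl b))).det =
      ((-1 : ℂ) ^ (∑ y ∈ K, (n - 1 - (y : ℕ)))) *
        (Matrix.of fun y b : Fin K.card =>
          A (J.orderEmbOfFin h y) (K.orderEmbOfFin rfl b)).det := by
    rw [Matrix.det_fromBlocks_zero₁₂, Matrix.det_one, one_mul]
    have hmr := Matrix.det_mul_row
      (fun b : Fin K.card => (-1 : ℂ) ^ (n - 1 - ((K.orderEmbOfFin rfl b : Fin n) : ℕ)))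
      (Matrix.of fun y b : Fin K.card =>
        A (J.orderEmbOfFin h y) (K.orderEmbOfFin rfl b))
    rw [show (Matrix.of fun (y b : Fin K.card) =>
          (-1 : ℂ) ^ (n - 1 - ((K.orderEmbOfFin rfl b : Fin n) : ℕ)) *
            A (J.orderEmbOfFin h y) (K.orderEmbOfFin rfl b)) =
        (Matrix.of fun (i j : Fin K.card) =>
          (fun b : Fin K.card => (-1 : ℂ) ^ (n - 1 - ((K.orderEmbOfFin rfl b : Fin n) : ℕ))) j *
            (Matrix.of fun y b : Fin K.card =>
              A (J.orderEmbOfFin h y) (K.orderEmbOfFin rfl b)) i j) from rfl, hmr]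
    congr 1
    rw [Finset.prod_pow_eq_pow_sum]
    congr 1
    exact sum_orderEmbOfFin K (fun y => n - 1 - (y : ℕ))
  -- the sign
  have hperm : (rowEquiv K).permCongr ((colEquiv K).trans (rowEquiv K).symm) = psi K := by
    apply Equiv.ext
    intro a
    obtain ⟨z, rfl⟩ := (rowEquiv K).surjective a
    rw [Equiv.permCongr_apply, Equiv.symm_apply_apply, Equiv.trans_apply,
      Equiv.apply_symm_apply]
    rcases z with x | y
    · rw [colEquiv_inl, rowEquiv_inl,
        psi_apply_lt K _ (show ((⟨(x : ℕ), lt_of_lt_of_le x.isLt (compl_card_le K)⟩ :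
          Fin n) : ℕ) < Kᶜ.card from x.isLt)]
    · have hge : ¬ ((⟨Kᶜ.card + (y.rev : ℕ), by
          have := y.rev.isLt; omega⟩ : Fin n) : ℕ) < Kᶜ.card := by
        simp only
        omega
      rw [colEquiv_inr, rowEquiv_inr, psi_apply_ge K _ hge]
      refine congrArg _ (Fin.ext ?_)
      simp only
      have h2 : (y.rev : ℕ) = K.card - 1 - (y : ℕ) := by rw [Fin.val_rev]; omega
      have h3 := y.isLt
      omega
  have hsign : ((Equiv.Perm.sign ((colEquiv K).trans (rowEquiv K).symm) : ℤ) : ℂ)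
      = (-1 : ℂ) ^ (∑ y ∈ K, (n - 1 - (y : ℕ))) := by
    have hs := Equiv.Perm.sign_permCongr (rowEquiv K) ((colEquiv K).trans (rowEquiv K).symm)
    rw [hperm, sign_psi] at hs
    rw [← hs]
    push_cast [Units.val_pow_eq_pow_val]
    norm_num
  have hdet1 := det_submatrix_equivs
    (Matrix.of fun a b : Fin n =>
      Bmat A ((Ise J K).orderEmbOfFin (card_Ise_eq J K h) a) b)
    (rowEquiv K) (colEquiv K)
  rw [hblocks, hDdet, hsign] at hdet1
  have hne : ((-1 : ℂ) ^ (∑ y ∈ K, (n - 1 - (y : ℕ)))) ≠ 0 := by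
    apply pow_ne_zero
    norm_num
  exact (mul_left_cancel₀ hne hdet1).symm

lemma key (A : Matrix (Fin n) (Fin n) ℂ) (J K : Finset (Fin n)) (h : J.card = K.card) :
    minorRow (Bmat A) (Ise J K) = minorJI A J K := by
  have hIc : (Ise J K).card = n := card_Ise_eq J K h
  rw [minorRow, dif_pos hIc, minorJI, dif_pos h]
  have h1 : (Matrix.of fun a b : Fin n => Bmat A ((Ise J K).orderIsoOfFin hIc a) b) =
      (Matrix.of fun a b : Fin n =>
        Bmat A ((Ise J K).orderEmbOfFin (card_Ise_eq J K h) a) b) := by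
    ext a b
    simp only [Matrix.of_apply, Finset.coe_orderIsoOfFin_apply]
  have h2 : (Matrix.of fun a b : Fin K.card =>
      A ((J.orderIsoOfFin h) a) ((K.orderIsoOfFin rfl) b)) =
      (Matrix.of fun y b : Fin K.card =>
        A (J.orderEmbOfFin h y) (K.orderEmbOfFin rfl b)) := by
    ext a b
    simp only [Matrix.of_apply, Finset.coe_orderIsoOfFin_apply]
  rw [h1, h2]
  exact main_det A J K h

lemma reconstruct (I : Finset (Fin (2 * n))) (hI : I.card = n) :
    ∃ J K : Finset (Fin n), J.card = K.card ∧ Ise J K = I := by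
  classical
  set J : Finset (Fin n) := Finset.univ.filter (fun j : Fin n => hiEmb n j ∈ I) with hJ
  set K : Finset (Fin n) := Finset.univ.filter (fun k : Fin n => lowEmb n k ∉ I) with hK
  have hIse : Ise J K = I := by
    ext x
    rw [Ise, Finset.mem_union, Finset.mem_map, Finset.mem_map]
    constructor
    · rintro (⟨k, hk, rfl⟩ | ⟨j, hj, rfl⟩)
      · simp only [hK, Finset.mem_compl, Finset.mem_filter, Finset.mem_univ, true_and,
          not_not] at hk
        exact hk
      · simp only [hJ, Finset.mem_filter, Finset.mem_univ, true_and] at hj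
        exact hj
    · intro hx
      by_cases hxn : (x : ℕ) < n
      · have hxeq : lowEmb n ⟨(x : ℕ), hxn⟩ = x := Fin.ext rfl
        refine Or.inl ⟨⟨(x : ℕ), hxn⟩, ?_, hxeq⟩
        simp only [hK, Finset.mem_compl, Finset.mem_filter, Finset.mem_univ, true_and,
          not_not]
        rw [hxeq]
        exact hx
      · have hx2 := x.isLt
        have hxeq : hiEmb n ⟨n - 1 - ((x : ℕ) - n), by omega⟩ = x := by
          apply Fin.ext
          simp only [hiEmb_val, Fin.val_rev]
          omega
        refine Or.inr ⟨⟨n - 1 - ((x : ℕ) - n), by omega⟩, ?_, hxeq⟩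
        simp only [hJ, Finset.mem_filter, Finset.mem_univ, true_and]
        rw [hxeq]
        exact hx
  refine ⟨J, K, ?_, hIse⟩
  have h1 := card_Ise J K
  rw [hIse, hI] at h1
  have h2 := card_compl_add_card' K
  omega

end TnnAux

/-- The column span of `(I_n ; A^∨)` lies in the totally nonnegative Grassmannian
`Gr_{≥0}(n, 2n)` iff `A` is totally nonnegative. -/


theorem grassmannian_point_tnn_iff_matrix_tnn {n : ℕ} (A : Matrix (Fin n) (Fin n) ℂ) :
    (∀ I : Finset (Fin (2 * n)), I.card = n → IsNonnegReal (minorRow (Bmat A) I)) ↔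
      TotallyNonneg A := by
  constructor
  · intro hyp J K h
    rw [← TnnAux.key A J K h]
    exact hyp (TnnAux.Ise J K) (TnnAux.card_Ise_eq J K h)
  · intro hA I hI
    obtain ⟨J, K, hJK, rfl⟩ := TnnAux.reconstruct I hI
    rw [TnnAux.key A J K hJK]
    exact hA J K hJK
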